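/- Let p > 1 and 0 ≤ δ < p − 1, and set μ := (p − 1 − δ)/2. Define on (0, ∞) the functions φ(r) = (pμ)^{(p−1)/2} μ / (μ² + r²)^{p/2}, χ(r) = (pμ)^{(p−1)/2} r / (μ² + r²)^{p/2}, and W(r) = pμ / (μ² + r²). Then for all r > 0: φ'(r) = −W(r) χ(r), χ'(r) + (δ/r) χ(r) = (W(r) − 2) φ(r), and W(r)^{p−1} = φ(r)² + χ(r)². -/

import Mathlib

/-- **The explicit solution of the radial nonlinear Dirac system at the lower
end of the gap** (`m = 1`, `λ = −1`): with `μ = (p−1−δ)/2`,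
`φ(r) = (pμ)^{(p−1)/2} μ/(μ²+r²)^{p/2}`, `χ(r) = (pμ)^{(p−1)/2} r/(μ²+r²)^{p/2}`
and `W(r) = pμ/(μ²+r²)` solve `φ' = −Wχ`, `χ' + (δ/r)χ = (W−2)φ`,
`W^{p−1} = φ² + χ²` on `(0, ∞)`. -/
theorem radial_explicit_solution
    (p δ : ℝ) (hp : 1 < p) (hδ₀ : 0 ≤ δ) (hδ : δ < p - 1)
    (μ : ℝ) (hμ : μ = (p - 1 - δ) / 2)
    (φ χ W : ℝ → ℝ)
    (hφ : ∀ r, φ r = (p * μ) ^ ((p - 1) / 2) * μ / (μ ^ 2 + r ^ 2) ^ (p / 2))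
    (hχ : ∀ r, χ r = (p * μ) ^ ((p - 1) / 2) * r / (μ ^ 2 + r ^ 2) ^ (p / 2))
    (hW : ∀ r, W r = p * μ / (μ ^ 2 + r ^ 2)) :
    ∀ r : ℝ, 0 < r →
      deriv φ r = -W r * χ r ∧
      deriv χ r + δ / r * χ r = (W r - 2) * φ r ∧
      W r ^ (p - 1) = φ r ^ 2 + χ r ^ 2 := by
  intro r hr
  have hμpos : 0 < μ := by rw [hμ]; linarith
  have hg : 0 < μ ^ 2 + r ^ 2 := by positivity
  have hpμ : 0 < p * μ := by positivity
  set A := (p * μ) ^ ((p - 1) / 2) with hA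
  have hApos : 0 < A := Real.rpow_pos_of_pos hpμ _
  set q := (μ ^ 2 + r ^ 2) ^ (p / 2) with hqdef
  have hqpos : 0 < q := Real.rpow_pos_of_pos hg _
  set B := (μ ^ 2 + r ^ 2) ^ (p - 1) with hB
  have hBpos : 0 < B := Real.rpow_pos_of_pos hg _
  set P := (p * μ) ^ (p - 1) with hP
  -- key rpow identities
  have e1 : (μ ^ 2 + r ^ 2) ^ (p / 2 - 1) * (μ ^ 2 + r ^ 2) = q := by
    have h := Real.rpow_add hg (p / 2 - 1) 1
    rw [Real.rpow_one] at h
    rw [← h, hqdef]; norm_num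
  have e2 : q * q = B * (μ ^ 2 + r ^ 2) := by
    have h := Real.rpow_add hg (p / 2) (p / 2)
    have h' := Real.rpow_add hg (p - 1) 1
    rw [Real.rpow_one] at h'
    rw [hqdef, hB, ← h, ← h']
    norm_num
  have e3 : A * A = P := by
    rw [hA, hP, ← Real.rpow_add hpμ]
    norm_num
  -- derivative of s ↦ (μ² + s²)^(p/2)
  have hinner : HasDerivAt (fun s : ℝ => μ ^ 2 + s ^ 2) (2 * r) r := by
    simpa using ((hasDerivAt_pow 2 r).const_add (μ ^ 2))
  have hqd : HasDerivAt (fun s : ℝ => (μ ^ 2 + s ^ 2) ^ (p / 2))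
      (p * r * q / (μ ^ 2 + r ^ 2)) r := by
    have h := hinner.rpow_const (p := p / 2) (Or.inl hg.ne')
    convert h using 1
    rw [← e1]
    field_simp
  have hφfun : φ = fun s : ℝ => A * μ / (μ ^ 2 + s ^ 2) ^ (p / 2) := funext hφ
  have hχfun : χ = fun s : ℝ => A * s / (μ ^ 2 + s ^ 2) ^ (p / 2) := funext hχ
  have hφd : HasDerivAt φ (-(A * μ * (p * r * q / (μ ^ 2 + r ^ 2))) / q ^ 2) r := by
    rw [hφfun]
    have := (hasDerivAt_const r (A * μ)).div hqd hqpos.ne'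
    rw [← hqdef] at this
    simp only [zero_mul, zero_sub] at this
    exact this
  have hχd : HasDerivAt χ ((A * q - A * r * (p * r * q / (μ ^ 2 + r ^ 2))) / q ^ 2) r := by
    rw [hχfun]
    have := ((hasDerivAt_id r).const_mul A).div hqd hqpos.ne'
    rw [← hqdef] at this
    simp only [mul_one, id] at this
    exact this
  have hWB : W r ^ (p - 1) = P / B := by
    rw [hW r, hP, hB, Real.div_rpow hpμ.le hg.le]
  clear_value A q B P
  refine ⟨?_, ?_, ?_⟩
  · rw [hφd.deriv, hW r, hχ r, ← hqdef]
    field_simp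
  · rw [hχd.deriv, hW r, hφ r, hχ r, ← hqdef]
    field_simp
    rw [hμ]
    ring
  · rw [hWB, hφ r, hχ r, ← hqdef]
    rw [div_pow, div_pow, ← add_div]
    rw [div_eq_div_iff hBpos.ne' (by positivity)]
    rw [pow_two q, e2]
    linear_combination (-(μ ^ 2 + r ^ 2) * B) * e3
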